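/- arXiv:2205.07175 — 3 statements merged into one kernel-verified Lean document; each statement's English description precedes it below -/
import Mathlib

section
/- Let F be a field of characteristic 0 (or characteristic greater than n), let β ∈ F with β ∉ {0,1,...,n}, and let f ∈ F[x_1,...,x_n] be a multilinear polynomial such that f(x)·(x_1+...+x_n−β) ≡ 1 modulo the ideal generated by x_i²−x_i for all i. Then deg f = n. -/
open Finset Nat MvPolynomial

lemma altsum (F : Type*) [Field F] : ∀ (n : ℕ) (γ : F), (∀ k : ℕ, k ≤ n → γ + k ≠ 0) →
    (∑ k ∈ Finset.range (n+1), (-1:F)^k * (n.choose k) * (γ + k)⁻¹)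
      * (∏ k ∈ Finset.range (n+1), (γ + k)) = (Nat.factorial n : F) := by
  intro n
  induction n with
  | zero =>
    intro γ h
    have h0 : γ + (0:ℕ) ≠ 0 := h 0 le_rfl
    simp only [Nat.cast_zero, add_zero] at h0
    simp only [zero_add, Finset.range_one, Finset.sum_singleton, Finset.prod_singleton, pow_zero,
      Nat.choose_self, Nat.cast_one, one_mul, Nat.factorial_zero, Nat.cast_zero, add_zero]
    exact inv_mul_cancel₀ h0
  | succ n ih =>
    intro γ h
    have hγ : γ ≠ 0 := by
      have := h 0 (Nat.zero_le _); simpa using this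
    set u : ℕ → F := fun k => (-1:F)^k * (n.choose k) * (γ + k)⁻¹ with hu
    have hA := ih γ (fun k hk => h k (le_trans hk (Nat.le_succ n)))
    have hB := ih (γ + 1) (fun k hk => by
      have := h (k+1) (by omega)
      push_cast at this ⊢
      ring_nf at this ⊢
      convert this using 2 <;> ring)
    set A : F := ∑ k ∈ Finset.range (n+1), u k with hAdef
    set B : F := ∑ k ∈ Finset.range (n+1), (-1:F)^k * (n.choose k) * ((γ+1) + k)⁻¹ with hBdef
    set P : F := ∏ k ∈ Finset.range (n+1), (γ + k) with hP
    set Q : F := ∏ k ∈ Finset.range (n+1), ((γ+1) + k) with hQ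
    have hS : (∑ k ∈ Finset.range (n+2), (-1:F)^k * ((n+1).choose k) * (γ + k)⁻¹) = A - B := by
      rw [Finset.sum_range_succ' (fun k => (-1:F)^k * ((n+1).choose k) * (γ + k)⁻¹) (n+1)]
      have : ∀ k ∈ Finset.range (n+1),
          (-1:F)^(k+1) * ((n+1).choose (k+1)) * (γ + (k+1:ℕ))⁻¹
          = (-1:F)^(k+1) * (n.choose (k+1)) * (γ + (k+1:ℕ))⁻¹
            - (-1:F)^k * (n.choose k) * ((γ+1) + k)⁻¹ := by
        intro k _
        rw [Nat.choose_succ_succ]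
        push_cast
        have : γ + ((k:F)+1) = (γ+1) + k := by ring
        rw [this]
        ring
      rw [Finset.sum_congr rfl this, Finset.sum_sub_distrib]
      have hAeq : A = (∑ k ∈ Finset.range (n+1), (-1:F)^(k+1) * (n.choose (k+1)) * (γ + (k+1:ℕ))⁻¹)
          + (-1:F)^0 * ((n+1).choose 0) * (γ + (0:ℕ))⁻¹ := by
        rw [hAdef]
        rw [Finset.sum_range_succ' u n]
        have hlast : u (n+1) = 0 := by
          simp [hu, Nat.choose_succ_self]
        rw [Finset.sum_range_succ (fun k => u (k+1)) n, hlast, add_zero] at *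
        simp [hu]
      rw [← hBdef]
      rw [hAeq]
      ring
    rw [hS]
    have hrel : γ * Q = P * (γ + (n+1:ℕ)) := by
      have h1 : ∏ k ∈ Finset.range (n+2), (γ + k) = P * (γ + (n+1:ℕ)) := by
        rw [hP, Finset.prod_range_succ]
      have h2 : ∏ k ∈ Finset.range (n+2), (γ + k) = γ * Q := by
        rw [Finset.prod_range_succ' (fun k => γ + (k:F)) (n+1)]
        rw [hQ]
        simp only [Nat.cast_zero, add_zero, Nat.cast_add, Nat.cast_one]
        rw [mul_comm]
        congr 1
        apply Finset.prod_congr rfl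
        intro k _
        ring
      rw [← h1, h2]
    have hfact : ((n+1)! : F) = ((n+1:ℕ) : F) * (n ! : F) := by
      rw [Nat.factorial_succ]; push_cast; ring
    rw [hfact]
    have h1 : ∏ k ∈ Finset.range (n+2), (γ + k) = P * (γ + (n+1:ℕ)) := by
      rw [hP, Finset.prod_range_succ]
    rw [h1]
    push_cast at hrel ⊢
    linear_combination (γ+(n:F)+1) * hA - γ * hB + B * hrel

lemma cube_inner_sum {F : Type*} [Field F] {n : ℕ} (S : Finset (Fin n)) :
    ∑ T : Finset (Fin n), (if S ⊆ T then (-1:F)^(n + T.card) else 0)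
      = if S = Finset.univ then 1 else 0 := by
  rw [← Finset.sum_filter]
  have hre : ∑ T ∈ Finset.univ.filter (fun T => S ⊆ T), (-1:F)^(n + T.card)
      = ∑ U ∈ Sᶜ.powerset, (-1:F)^(n + S.card + U.card) := by
    apply Finset.sum_nbij' (fun T => T \ S) (fun U => S ∪ U)
    · intro T hT
      simp only [Finset.mem_powerset]
      intro x hx
      simp only [Finset.mem_sdiff] at hx
      simp [Finset.mem_compl, hx.2]
    · intro U hU
      simp
    · intro T hT
      simp only [Finset.mem_filter] at hT
      exact Finset.union_sdiff_of_subset hT.2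
    · intro U hU
      simp only [Finset.mem_powerset] at hU
      apply Finset.union_sdiff_cancel_left
      rw [Finset.disjoint_left]
      intro x hxS hxU
      exact (Finset.mem_compl.mp (hU hxU)) hxS
    · intro T hT
      simp only [Finset.mem_filter] at hT
      congr 1
      have := Finset.card_sdiff_add_card_eq_card hT.2
      omega
  rw [hre]
  have hsplit : ∀ U ∈ Sᶜ.powerset, (-1:F)^(n + S.card + U.card)
      = (-1:F)^(n + S.card) * (-1:F)^(U.card) := fun U _ => by rw [pow_add]
  rw [Finset.sum_congr rfl hsplit, ← Finset.mul_sum]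
  have hz : (∑ U ∈ Sᶜ.powerset, (-1:F)^(U.card)) = if Sᶜ = ∅ then 1 else 0 := by
    have := Finset.sum_powerset_neg_one_pow_card (x := Sᶜ)
    have hcast := congrArg (Int.cast : ℤ → F) this
    push_cast at hcast
    convert hcast using 2
  rw [hz]
  by_cases hS : S = Finset.univ
  · rw [if_pos hS, if_pos (by simp [hS]), hS, mul_one]
    have : (Finset.univ : Finset (Fin n)).card = n := by simp
    rw [this, ← two_mul, pow_mul]
    norm_num
  · rw [if_neg hS, if_neg (by simpa using hS), mul_zero]

lemma coeff_top {F : Type*} [Field F] {n : ℕ} (f : MvPolynomial (Fin n) F)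
    (hml : ∀ i, MvPolynomial.degreeOf i f ≤ 1) :
    ∑ T : Finset (Fin n),
        (-1:F)^(n + T.card) * MvPolynomial.eval (fun i => if i ∈ T then (1:F) else 0) f
      = MvPolynomial.coeff (Finsupp.equivFunOnFinite.symm fun _ => 1) f := by
  have heval : ∀ T : Finset (Fin n),
      MvPolynomial.eval (fun i => if i ∈ T then (1:F) else 0) f
        = ∑ d ∈ f.support, f.coeff d * (if d.support ⊆ T then 1 else 0) := by
    intro T
    rw [MvPolynomial.eval_eq]
    apply Finset.sum_congr rfl
    intro d _
    congr 1
    by_cases hsub : d.support ⊆ T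
    · rw [if_pos hsub]
      apply Finset.prod_eq_one
      intro i hi
      rw [if_pos (hsub hi), one_pow]
    · rw [if_neg hsub]
      obtain ⟨i, hi, hiT⟩ := Finset.not_subset.mp hsub
      apply Finset.prod_eq_zero hi
      rw [if_neg hiT]
      exact zero_pow (Finsupp.mem_support_iff.mp hi)
  calc ∑ T : Finset (Fin n),
        (-1:F)^(n + T.card) * MvPolynomial.eval (fun i => if i ∈ T then (1:F) else 0) f
      = ∑ T : Finset (Fin n), ∑ d ∈ f.support,
          f.coeff d * (if d.support ⊆ T then (-1:F)^(n + T.card) else 0) := by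
        apply Finset.sum_congr rfl
        intro T _
        rw [heval T, Finset.mul_sum]
        apply Finset.sum_congr rfl
        intro d _
        split <;> ring
    _ = ∑ d ∈ f.support, f.coeff d *
          ∑ T : Finset (Fin n), (if d.support ⊆ T then (-1:F)^(n + T.card) else 0) := by
        rw [Finset.sum_comm]
        simp_rw [Finset.mul_sum]
    _ = ∑ d ∈ f.support, f.coeff d * (if d.support = Finset.univ then 1 else 0) := by
        simp_rw [cube_inner_sum]
    _ = MvPolynomial.coeff (Finsupp.equivFunOnFinite.symm fun _ => 1) f := by
        have hsupp : (Finsupp.equivFunOnFinite.symm fun _ : Fin n => (1:ℕ)).support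
            = Finset.univ := by
          ext i; simp [Finsupp.mem_support_iff]
        rw [Finset.sum_eq_single (Finsupp.equivFunOnFinite.symm fun _ => 1)]
        · rw [if_pos hsupp, mul_one]
        · intro d hd hne
          rw [if_neg, mul_zero]
          intro hyp
          apply hne
          ext i
          have h1 : d i ≤ 1 := by
            have := hml i
            rw [MvPolynomial.degreeOf_eq_sup] at this
            exact le_trans (Finset.le_sup (f := fun m => m i) hd) this
          have h2 : i ∈ d.support := hyp ▸ Finset.mem_univ i
          rw [Finsupp.mem_support_iff] at h2
          simp only [Finsupp.coe_equivFunOnFinite_symm]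
          omega
        · intro h
          rw [MvPolynomial.coeff, Finsupp.notMem_support_iff.mp h, zero_mul]

theorem stmt0 (F : Type*) [Field F] (n : ℕ)
    (hchar : CharZero F ∨ n < ringChar F)
    (β : F) (hβ : ∀ i : ℕ, i ≤ n → (i : F) ≠ β)
    (f : MvPolynomial (Fin n) F)
    (hml : ∀ i, MvPolynomial.degreeOf i f ≤ 1)
    (hf : ∀ a : Fin n → F, (∀ i, a i = 0 ∨ a i = 1) →
      (MvPolynomial.eval a f) * ((∑ i, a i) - β) = 1) :
    f.totalDegree = n := by
  have hne : ∀ k : ℕ, k ≤ n → ((k:F) - β) ≠ 0 := fun k hk => sub_ne_zero.mpr (hβ k hk)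
  -- n! is nonzero in F
  have hfac : (Nat.factorial n : F) ≠ 0 := by
    rcases hchar with hc | hc
    · exact_mod_cast Nat.cast_ne_zero.mpr n.factorial_pos.ne'
    · have hcp : CharP F (ringChar F) := ringChar.charP F
      have hp : (ringChar F).Prime := by
        rcases CharP.char_is_prime_or_zero F (ringChar F) with h | h
        · exact h
        · omega
      intro h0
      rw [CharP.cast_eq_zero_iff F (ringChar F)] at h0
      have := (Nat.Prime.dvd_factorial hp).mp h0
      omega
  -- evaluations on the cube
  have hinv : ∀ T : Finset (Fin n),
      MvPolynomial.eval (fun i => if i ∈ T then (1:F) else 0) f = ((T.card : F) - β)⁻¹ := by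
    intro T
    have hb : ∀ i, (if i ∈ T then (1:F) else 0) = 0 ∨ (if i ∈ T then (1:F) else 0) = 1 :=
      fun i => by by_cases h : i ∈ T <;> simp [h]
    have h1 := hf _ hb
    have hsum : (∑ i, if i ∈ T then (1:F) else 0) = (T.card : F) := by
      rw [Finset.sum_ite_mem]
      simp
    rw [hsum] at h1
    exact eq_inv_of_mul_eq_one_left h1
  -- the top coefficient
  set d1 : Fin n →₀ ℕ := Finsupp.equivFunOnFinite.symm fun _ => 1 with hd1
  have hc : MvPolynomial.coeff d1 f
      = ∑ T : Finset (Fin n), (-1:F)^(n + T.card) * ((T.card : F) - β)⁻¹ := by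
    rw [← coeff_top f hml]
    exact Finset.sum_congr rfl fun T _ => by rw [hinv T]
  have hc2 : MvPolynomial.coeff d1 f
      = (-1:F)^n * ∑ m ∈ Finset.range (n+1),
          (-1:F)^m * (n.choose m : F) * ((-β) + m)⁻¹ := by
    rw [hc]
    rw [show (Finset.univ : Finset (Finset (Fin n)))
        = (Finset.univ : Finset (Fin n)).powerset from (Finset.powerset_univ).symm]
    rw [Finset.sum_powerset_apply_card (fun m => (-1:F)^(n + m) * ((m : F) - β)⁻¹)]
    rw [Finset.mul_sum]
    rw [show (Finset.univ : Finset (Fin n)).card = n by simp]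
    apply Finset.sum_congr rfl
    intro m _
    rw [nsmul_eq_mul, pow_add]
    rw [show ((m:F) - β) = (-β) + m by ring]
    ring
  have halt := altsum F n (-β) (fun k hk => by
    intro h0
    exact hne k hk (by linear_combination h0))
  have hP : (∏ k ∈ Finset.range (n+1), ((-β) + (k:F))) ≠ 0 := by
    apply Finset.prod_ne_zero_iff.mpr
    intro k hk
    intro h0
    exact hne k (by simpa [Nat.lt_succ_iff] using hk) (by linear_combination h0)
  have hsne : (∑ k ∈ Finset.range (n+1), (-1:F)^k * (n.choose k) * ((-β) + k)⁻¹) ≠ 0 := by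
    intro h0
    rw [h0, zero_mul] at halt
    exact hfac halt.symm
  have hcne : MvPolynomial.coeff d1 f ≠ 0 := by
    rw [hc2]
    exact mul_ne_zero (pow_ne_zero _ (by norm_num)) hsne
  -- conclude
  have hmem : d1 ∈ f.support := MvPolynomial.mem_support_iff.mpr hcne
  have hsupp : d1.support = Finset.univ := by
    ext i; simp [hd1, Finsupp.mem_support_iff]
  have hd1sum : (d1.sum fun _ e => e) = n := by
    rw [Finsupp.sum, hsupp]
    simp [hd1]
  apply le_antisymm
  · rw [MvPolynomial.totalDegree]
    apply Finset.sup_le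
    intro d hd
    have hle : ∀ i, d i ≤ 1 := by
      intro i
      have := hml i
      rw [MvPolynomial.degreeOf_eq_sup] at this
      exact le_trans (Finset.le_sup (f := fun m => m i) hd) this
    calc (d.sum fun _ e => e) = ∑ i ∈ d.support, d i := rfl
      _ ≤ ∑ i ∈ d.support, 1 := Finset.sum_le_sum fun i _ => hle i
      _ = d.support.card := by simp
      _ ≤ Fintype.card (Fin n) := Finset.card_le_univ _
      _ = n := Fintype.card_fin n
  · have h := MvPolynomial.le_totalDegree hmem
    rwa [hd1sum] at h
end

section
/- Let F be a field of characteristic 0, β ∈ F with β ∉ {0,1,...,n}, and f the unique multilinear polynomial in F[x_1,...,x_n] satisfying f(a)·(a_1+...+a_n−β)=1 for all a ∈ {0,1}^n. Then for any monomial order, the leading monomial of f is x_1·x_2·...·x_n. -/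
open Finset

lemma negpow {F : Type*} [Field F] {t s : ℕ} (h : t ≤ s) :
    (-1 : F)^(s-t) = (-1)^s * (-1)^t := by
  have h1 : (-1:F)^(s-t) * (-1)^t = (-1)^s := by rw [← pow_add, Nat.sub_add_cancel h]
  have h2 : ((-1:F)^t) * ((-1)^t) = 1 := by rw [← mul_pow]; norm_num
  calc (-1:F)^(s-t) = (-1:F)^(s-t) * ((-1)^t * (-1)^t) := by rw [h2, mul_one]
    _ = (-1)^s * (-1)^t := by rw [← mul_assoc, h1]

lemma mobius {α F : Type*} [DecidableEq α] [Field F] (c e : Finset α → F)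
    (h : ∀ S, e S = ∑ T ∈ S.powerset, c T) (S : Finset α) :
    c S = ∑ T ∈ S.powerset, (-1)^(#S - #T) * e T := by
  have swap : ∑ T ∈ S.powerset, (-1:F)^(#S - #T) * e T
      = ∑ U ∈ S.powerset, c U * ∑ T ∈ S.powerset.filter (U ⊆ ·), (-1)^(#S - #T) := by
    simp_rw [h, Finset.mul_sum]
    rw [Finset.sum_comm' (s := S.powerset) (t := fun T => T.powerset)
      (t' := S.powerset) (s' := fun U => S.powerset.filter (U ⊆ ·))]
    · apply Finset.sum_congr rfl; intro U _; apply Finset.sum_congr rfl; intro T _; ring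
    · intro T U
      simp only [mem_powerset, mem_filter]
      constructor
      · rintro ⟨h1, h2⟩; exact ⟨⟨h1, h2⟩, h2.trans h1⟩
      · rintro ⟨⟨h1, h2⟩, _⟩; exact ⟨h1, h2⟩
  have inner : ∀ U ∈ S.powerset,
      ∑ T ∈ S.powerset.filter (U ⊆ ·), (-1:F)^(#S - #T)
        = if U = S then 1 else 0 := by
    intro U hU
    rw [mem_powerset] at hU
    have step : ∑ T ∈ S.powerset.filter (U ⊆ ·), (-1:F)^(#S - #T)
        = ∑ V ∈ (S \ U).powerset, (-1:F)^(#(S\U) - #V) := by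
      apply Finset.sum_nbij' (fun T => T \ U) (fun V => U ∪ V)
      · intro T hT; simp only [mem_filter, mem_powerset] at hT ⊢
        exact sdiff_subset_sdiff hT.1 le_rfl
      · intro V hV; simp only [mem_filter, mem_powerset] at hV ⊢
        exact ⟨union_subset hU (hV.trans sdiff_subset), subset_union_left⟩
      · intro T hT; simp only [mem_filter, mem_powerset] at hT
        exact union_sdiff_of_subset hT.2
      · intro V hV; simp only [mem_powerset] at hV
        exact union_sdiff_cancel_left (Finset.sdiff_disjoint.mono_left hV).symm
      · intro T hT; simp only [mem_filter, mem_powerset] at hT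
        congr 1
        have h1 := card_le_card hT.1
        have h2 := card_le_card hT.2
        rw [card_sdiff_of_subset hU, card_sdiff_of_subset hT.2]
        omega
    rw [step]
    have : ∀ V ∈ (S\U).powerset, (-1:F)^(#(S\U) - #V) = (-1)^(#(S\U)) * (-1)^(#V) := by
      intro V hV; exact negpow (card_le_card (mem_powerset.mp hV))
    rw [Finset.sum_congr rfl this, ← Finset.mul_sum]
    have hz : (∑ i ∈ (S\U).powerset, (-1:F)^#i) = if S\U = ∅ then 1 else 0 := by
      have := Finset.sum_powerset_neg_one_pow_card (x := S \ U)
      exact_mod_cast congrArg (Int.cast : ℤ → F) this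
    rw [hz]
    by_cases hUS : U = S
    · simp [hUS]
    · have : S \ U ≠ ∅ := by
        rw [Ne, Finset.sdiff_eq_empty_iff_subset]
        exact fun hs => hUS (Finset.Subset.antisymm hU hs)
      simp [hUS, this]
  rw [swap, Finset.sum_congr rfl (fun U hU => by rw [inner U hU])]
  simp only [mul_ite, mul_one, mul_zero]
  rw [Finset.sum_ite_eq' S.powerset S c]
  simp

lemma keyid {F : Type*} [Field F] [CharZero F] :
    ∀ (n : ℕ) (β : F), (∀ k : ℕ, k ≤ n → (k:F) ≠ β) →
    ∑ k ∈ range (n+1), (-1:F)^k * (n.choose k) * ((k:F) - β)⁻¹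
      = (n.factorial : F) * (∏ k ∈ range (n+1), ((k:F) - β))⁻¹ := by
  intro n
  induction n with
  | zero => intro β hβ; simp
  | succ n IH =>
    intro β hβ
    have hβ' : ∀ k : ℕ, k ≤ n → (k:F) ≠ β := fun k hk => hβ k (hk.trans (Nat.le_succ n))
    have hβ1 : ∀ k : ℕ, k ≤ n → (k:F) ≠ β - 1 := by
      intro k hk h
      have hcast : ((k+1:ℕ):F) = β := by push_cast; linear_combination h
      exact hβ (k+1) (by omega) hcast
    set f : ℕ → F := fun j => (-1:F)^j * ((n+1).choose j : F) * ((j:F) - β)⁻¹ with hfdef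
    set g : ℕ → F := fun j => (-1:F)^j * (n.choose j : F) * ((j:F) - β)⁻¹ with hgdef
    set h : ℕ → F := fun j => (-1:F)^j * (n.choose j : F) * ((j:F) - (β-1))⁻¹ with hhdef
    have hrec : ∑ k ∈ range (n+2), f k
        = (∑ k ∈ range (n+1), g k) - (∑ k ∈ range (n+1), h k) := by
      have hf0 : f 0 = g 0 := by simp [hfdef, hgdef]
      have hfk : ∀ k, f (k+1) = g (k+1) - h k := by
        intro k
        simp only [hfdef, hgdef, hhdef]
        rw [Nat.choose_succ_succ]
        have : ((k:F)+1) - β = (k:F) - (β - 1) := by ring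
        push_cast [this]
        rw [pow_succ]
        ring
      have hgtop : g (n+1) = 0 := by simp [hgdef, Nat.choose_succ_self]
      calc ∑ k ∈ range (n+2), f k
          = (∑ k ∈ range (n+1), f (k+1)) + f 0 := Finset.sum_range_succ' f (n+1)
        _ = (∑ k ∈ range (n+1), (g (k+1) - h k)) + g 0 := by
            rw [hf0, Finset.sum_congr rfl (fun k _ => hfk k)]
        _ = ((∑ k ∈ range (n+1), g (k+1)) + g 0) - (∑ k ∈ range (n+1), h k) := by
            rw [Finset.sum_sub_distrib]; ring
        _ = (∑ k ∈ range (n+2), g k) - (∑ k ∈ range (n+1), h k) := by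
            rw [← Finset.sum_range_succ' g (n+1)]
        _ = _ := by rw [Finset.sum_range_succ g (n+1), hgtop, add_zero]
    rw [hrec, IH β hβ', IH (β-1) hβ1]
    -- algebra
    have hP : (∏ k ∈ range (n+1), ((k:F) - β)) ≠ 0 := by
      rw [Finset.prod_ne_zero_iff]
      exact fun k hk => sub_ne_zero_of_ne (hβ' k (by simpa [Nat.lt_succ_iff] using hk))
    have hP2 : (∏ k ∈ range (n+2), ((k:F) - β)) ≠ 0 := by
      rw [Finset.prod_ne_zero_iff]
      exact fun k hk => sub_ne_zero_of_ne (hβ k (by simpa [Nat.lt_succ_iff] using hk))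
    have hlink : (∏ k ∈ range (n+1), ((k:F) - (β-1))) * ((0:F) - β)
        = ∏ k ∈ range (n+2), ((k:F) - β) := by
      rw [Finset.prod_range_succ' (fun k => ((k:F) - β)) (n+1)]
      push_cast
      apply congrArg (· * ((0:F) - β))
      apply Finset.prod_congr rfl
      intro k _
      ring
    have hQ : (∏ k ∈ range (n+1), ((k:F) - (β-1))) ≠ 0 := by
      intro h0
      apply hP2
      rw [← hlink, h0, zero_mul]
    have hβ0 : (0:F) - β ≠ 0 := sub_ne_zero_of_ne (by exact_mod_cast hβ 0 (by omega))
    have hP2eq : (∏ k ∈ range (n+2), ((k:F) - β))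
        = (∏ k ∈ range (n+1), ((k:F) - β)) * (((n+1:ℕ):F) - β) :=
      Finset.prod_range_succ (fun k => ((k:F) - β)) (n+1)
    have hu : (((n+1:ℕ):F) - β) ≠ 0 := sub_ne_zero_of_ne (hβ (n+1) le_rfl)
    have e1 : (∏ k ∈ range (n+1), ((k:F) - (β-1)))⁻¹
        = ((0:F) - β) * (∏ k ∈ range (n+2), ((k:F) - β))⁻¹ := by
      rw [← hlink, mul_inv, ← mul_assoc, mul_comm ((0:F)-β), mul_assoc,
        mul_inv_cancel₀ hβ0, mul_one]
    have e2 : (∏ k ∈ range (n+1), ((k:F) - β))⁻¹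
        = (((n+1:ℕ):F) - β) * (∏ k ∈ range (n+2), ((k:F) - β))⁻¹ := by
      rw [hP2eq, mul_inv, ← mul_assoc, mul_comm (((n+1:ℕ):F)-β), mul_assoc,
        mul_inv_cancel₀ hu, mul_one]
    rw [e1, e2, Nat.factorial_succ]
    push_cast
    ring


theorem stmt1 (F : Type*) [Field F] [CharZero F] (n : ℕ)
    (β : F) (hβ : ∀ i : ℕ, i ≤ n → (i : F) ≠ β)
    (f : MvPolynomial (Fin n) F)
    (hml : ∀ i, MvPolynomial.degreeOf i f ≤ 1)
    (hf : ∀ a : Fin n → F, (∀ i, a i = 0 ∨ a i = 1) →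
      (MvPolynomial.eval a f) * ((∑ i, a i) - β) = 1)
    (le : (Fin n →₀ ℕ) → (Fin n →₀ ℕ) → Prop)
    (hlin : IsLinearOrder _ le)
    (hwell : WellFounded (fun a b => le a b ∧ a ≠ b))
    (hadd : ∀ a b c, le a b → le (a + c) (b + c)) :
    (∑ i, Finsupp.single i 1) ∈ f.support ∧
      ∀ m ∈ f.support, le m (∑ i, Finsupp.single i 1) := by
  classical
  set toMono : Finset (Fin n) → (Fin n →₀ ℕ) := fun T => ∑ i ∈ T, Finsupp.single i 1 with htm
  set indF : Finset (Fin n) → (Fin n → F) := fun T i => if i ∈ T then 1 else 0 with hind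
  set c : Finset (Fin n) → F := fun T => MvPolynomial.coeff (toMono T) f with hc
  set e : Finset (Fin n) → F := fun T => MvPolynomial.eval (indF T) f with he
  have toMono_apply : ∀ (T : Finset (Fin n)) i, toMono T i = if i ∈ T then 1 else 0 := by
    intro T i
    rw [htm]
    simp only
    rw [Finsupp.finset_sum_apply]
    simp [Finsupp.single_apply]
  have support_le : ∀ m ∈ f.support, ∀ i, m i ≤ 1 := by
    intro m hm i
    have h2 : MvPolynomial.degreeOf i f < 2 := lt_of_le_of_lt (hml i) one_lt_two
    rw [MvPolynomial.degreeOf_lt_iff (by norm_num)] at h2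
    exact Nat.lt_succ_iff.mp (h2 m hm)
  have toMono_of_mem : ∀ m ∈ f.support, toMono m.support = m := by
    intro m hm
    ext i
    rw [toMono_apply]
    by_cases hi : i ∈ m.support
    · rw [if_pos hi]
      have := Finsupp.mem_support_iff.mp hi
      have := support_le m hm i
      omega
    · rw [if_neg hi]
      have := Finsupp.notMem_support_iff.mp hi
      omega
  have toMono_support : ∀ T : Finset (Fin n), (toMono T).support = T := by
    intro T
    ext i
    rw [Finsupp.mem_support_iff, toMono_apply]
    by_cases hi : i ∈ T <;> simp [hi]
  have heval : ∀ S : Finset (Fin n), e S = ∑ T ∈ S.powerset, c T := by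
    intro S
    rw [he]
    simp only
    rw [MvPolynomial.eval_eq]
    have hterm : ∀ d ∈ f.support,
        MvPolynomial.coeff d f * ∏ i ∈ d.support, (indF S i)^(d i)
          = if d.support ⊆ S then MvPolynomial.coeff d f else 0 := by
      intro d hd
      by_cases hds : d.support ⊆ S
      · rw [if_pos hds, Finset.prod_eq_one, mul_one]
        intro i hi
        rw [show indF S i = 1 from if_pos (hds hi), one_pow]
      · rw [if_neg hds]
        obtain ⟨i, hi, his⟩ : ∃ i ∈ d.support, i ∉ S := by
          by_contra hcon; push_neg at hcon; exact hds hcon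
        rw [Finset.prod_eq_zero hi, mul_zero]
        rw [show indF S i = 0 from if_neg his]
        exact zero_pow (Finsupp.mem_support_iff.mp hi)
    rw [Finset.sum_congr rfl hterm, ← Finset.sum_filter]
    rw [show (∑ T ∈ S.powerset, c T)
        = ∑ T ∈ S.powerset.filter (fun T => toMono T ∈ f.support), c T from
      (Finset.sum_filter_of_ne (fun T _ hT => MvPolynomial.mem_support_iff.mpr hT)).symm]
    apply Finset.sum_nbij' (fun d => d.support) (fun T => toMono T)
    · intro d hd
      rw [Finset.mem_filter] at hd ⊢
      rw [Finset.mem_powerset]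
      exact ⟨hd.2, by rw [toMono_of_mem d hd.1]; exact hd.1⟩
    · intro T hT
      rw [Finset.mem_filter] at hT ⊢
      rw [Finset.mem_powerset] at hT
      exact ⟨hT.2, by rw [toMono_support]; exact hT.1⟩
    · intro d hd
      rw [Finset.mem_filter] at hd
      exact toMono_of_mem d hd.1
    · intro T hT
      exact toMono_support T
    · intro d hd
      rw [Finset.mem_filter] at hd
      rw [hc]
      simp only
      rw [toMono_of_mem d hd.1]
  have hmob := mobius c e heval Finset.univ
  have evalval : ∀ T : Finset (Fin n), e T = ((#T : F) - β)⁻¹ := by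
    intro T
    have h01 : ∀ i, indF T i = 0 ∨ indF T i = 1 := by
      intro i; rw [hind]; simp only; split <;> simp
    have hsum : (∑ i, indF T i) = (#T : F) := by
      rw [hind]; simp only
      rw [Finset.sum_ite_mem]
      simp [Finset.univ_inter]
    have h2 := hf (indF T) h01
    rw [hsum] at h2
    change e T * _ = 1 at h2
    have hne : ((#T:F) - β) ≠ 0 := by
      apply sub_ne_zero_of_ne
      apply hβ
      calc #T ≤ Fintype.card (Fin n) := Finset.card_le_univ T
        _ = n := Fintype.card_fin n
    calc e T = e T * (((#T:F) - β) * ((#T:F) - β)⁻¹) := by rw [mul_inv_cancel₀ hne, mul_one]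
      _ = ((#T:F) - β)⁻¹ := by rw [← mul_assoc, h2, one_mul]
  have huniv : #(Finset.univ : Finset (Fin n)) = n := by simp
  set G : ℕ → F := fun k => (-1:F)^(n-k) * ((k:F) - β)⁻¹ with hG
  have hval : c Finset.univ
      = (-1:F)^n * ((n.factorial : F) * (∏ k ∈ range (n+1), ((k:F) - β))⁻¹) := by
    rw [hmob]
    have step1 : ∀ T ∈ (Finset.univ : Finset (Fin n)).powerset,
        (-1:F)^(#(Finset.univ : Finset (Fin n)) - #T) * e T = G (#T) := by
      intro T _
      rw [evalval, huniv, hG]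
    rw [Finset.sum_congr rfl step1, Finset.sum_powerset, huniv]
    have step2 : ∀ j ∈ range (n+1),
        (∑ T ∈ Finset.powersetCard j (Finset.univ : Finset (Fin n)), G (#T))
          = (n.choose j) • G j := by
      intro j _
      rw [Finset.sum_powersetCard j Finset.univ G, huniv]
    rw [Finset.sum_congr rfl step2]
    rw [← keyid n β hβ, Finset.mul_sum]
    apply Finset.sum_congr rfl
    intro k hk
    have hkn : k ≤ n := Nat.lt_succ_iff.mp (Finset.mem_range.mp hk)
    rw [hG, nsmul_eq_mul]
    simp only
    rw [negpow hkn]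
    ring
  have hcne : c Finset.univ ≠ 0 := by
    rw [hval]
    apply mul_ne_zero
    · exact pow_ne_zero n (by norm_num)
    apply mul_ne_zero
    · exact_mod_cast Nat.cast_ne_zero.mpr n.factorial_ne_zero
    · apply inv_ne_zero
      rw [Finset.prod_ne_zero_iff]
      intro k hk
      exact sub_ne_zero_of_ne (hβ k (Nat.lt_succ_iff.mp (Finset.mem_range.mp hk)))
  haveI := hlin
  have hmin : ∀ x : Fin n →₀ ℕ, le 0 x := by
    intro x
    by_contra hx
    have hx0 : x ≠ 0 := by rintro rfl; exact hx (Std.Refl.refl (r := le) 0)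
    have hxle : le x 0 := (Std.Total.total (r := le) x 0).resolve_right hx
    have hdesc : ∀ k : ℕ, le ((k+1) • x) (k • x) ∧ (k+1) • x ≠ k • x := by
      intro k
      constructor
      · have h3 := hadd x 0 (k • x) hxle
        rw [zero_add] at h3
        have h2 : (k+1) • x = x + k • x := by rw [add_nsmul, one_nsmul, add_comm]
        rw [h2]
        exact h3
      · intro hE
        obtain ⟨i, hi⟩ : ∃ i, x i ≠ 0 := by
          by_contra hcon; push_neg at hcon
          exact hx0 (Finsupp.ext hcon)
        have h4 := DFunLike.congr_fun hE i
        simp only [Finsupp.smul_apply, smul_eq_mul, add_mul, one_mul] at h4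
        omega
    obtain ⟨a, ⟨k, hk⟩, hmn⟩ := hwell.has_min (Set.range (fun k : ℕ => k • x))
      ⟨x, 1, one_nsmul x⟩
    exact hmn ((k+1) • x) ⟨k+1, rfl⟩ (hk ▸ hdesc k)
  constructor
  · rw [MvPolynomial.mem_support_iff]
    exact hcne
  · intro m hm
    have hle1 := support_le m hm
    have hone : ∀ i, (∑ j, Finsupp.single j 1 : Fin n →₀ ℕ) i = 1 := by
      intro i
      have h5 : (∑ j, Finsupp.single j 1 : Fin n →₀ ℕ) = toMono Finset.univ := rfl
      rw [h5, toMono_apply]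
      simp
    have hdecomp : (∑ i, Finsupp.single i 1 : Fin n →₀ ℕ)
        = m + ((∑ i, Finsupp.single i 1) - m) := by
      ext i
      rw [Finsupp.add_apply, Finsupp.tsub_apply, hone i]
      have := hle1 i
      omega
    have h6 := hadd 0 ((∑ i, Finsupp.single i 1) - m) m
      (hmin ((∑ i, Finsupp.single i 1) - m))
    rw [zero_add, add_comm] at h6
    rw [hdecomp]
    exact h6
end

section
/- Let w ∈ ℤ^d be a balanced word such that |w_i| ≤ b for every i ∈ [d]. Then |Σ_{i=1}^d w_i| ≤ b. -/
def posIdx (d : ℕ) (w : Fin d → ℤ) : Finset (Fin d) :=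
  Finset.univ.filter fun i => 0 ≤ w i

def negIdx (d : ℕ) (w : Fin d → ℤ) : Finset (Fin d) :=
  Finset.univ.filter fun i => w i < 0

noncomputable def Aint {d : ℕ} (w : Fin d → ℤ) (i : Fin d) : Finset ℤ :=
  Finset.Ioc (∑ i' ∈ (posIdx d w).filter (fun i' => i' < i), w i')
             (∑ i' ∈ (posIdx d w).filter (fun i' => i' ≤ i), w i')

noncomputable def Bint {d : ℕ} (w : Fin d → ℤ) (j : Fin d) : Finset ℤ :=
  Finset.Ioc (∑ j' ∈ (negIdx d w).filter (fun j' => j' < j), |w j'|)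
             (∑ j' ∈ (negIdx d w).filter (fun j' => j' ≤ j), |w j'|)

def BalancedWord {d : ℕ} (w : Fin d → ℤ) : Prop :=
  (∀ i ∈ posIdx d w, ∃ j ∈ negIdx d w, ((Aint w i) ∩ (Bint w j)).Nonempty) ∧
  (∀ j ∈ negIdx d w, ∃ i ∈ posIdx d w, ((Aint w i) ∩ (Bint w j)).Nonempty)

theorem stmt5 {d : ℕ} (w : Fin d → ℤ) (b : ℕ)
    (hbal : BalancedWord w) (hb : ∀ i, |w i| ≤ (b : ℤ)) :
    |∑ i, w i| ≤ (b : ℤ) := by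
  rcases Nat.eq_zero_or_pos d with hd | hd
  · subst hd; simp
  have hw_pos : ∀ i ∈ posIdx d w, 0 ≤ w i := by
    intro i hi; simpa [posIdx] using hi
  have hw_neg : ∀ i ∈ negIdx d w, w i < 0 := by
    intro i hi; simpa [negIdx] using hi
  set P := ∑ i ∈ posIdx d w, w i with hP
  set N := ∑ j ∈ negIdx d w, |w j| with hN
  have habs : ∀ j ∈ negIdx d w, |w j| = -w j := by
    intro j hj; exact abs_of_neg (hw_neg j hj)
  have hsum : ∑ i, w i = P - N := by
    have hsplit := Finset.sum_filter_add_sum_filter_not Finset.univ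
      (fun i => 0 ≤ w i) w
    have hneg : Finset.univ.filter (fun i => ¬ 0 ≤ w i) = negIdx d w := by
      simp [negIdx, not_le]
    rw [hneg] at hsplit
    have : ∑ j ∈ negIdx d w, w j = -N := by
      rw [hN, ← Finset.sum_neg_distrib]
      exact Finset.sum_congr rfl (fun j hj => by rw [habs j hj]; ring)
    rw [hP, ← hsplit, posIdx, this]; ring
  -- both index sets nonempty
  have hne : (posIdx d w).Nonempty ∧ (negIdx d w).Nonempty := by
    obtain ⟨i0⟩ : Nonempty (Fin d) := ⟨⟨0, hd⟩⟩
    by_cases h : 0 ≤ w i0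
    · have hi : i0 ∈ posIdx d w := by simp [posIdx, h]
      obtain ⟨j, hj, -⟩ := hbal.1 i0 hi
      exact ⟨⟨i0, hi⟩, ⟨j, hj⟩⟩
    · have hi : i0 ∈ negIdx d w := by simp [negIdx]; omega
      obtain ⟨i, hii, -⟩ := hbal.2 i0 hi
      exact ⟨⟨i, hii⟩, ⟨i0, hi⟩⟩
  obtain ⟨hpne, hnne⟩ := hne
  -- bound 1: P - N ≤ b
  have hbd1 : P - N ≤ (b : ℤ) := by
    set i0 := (posIdx d w).max' hpne with hi0def
    have hi0 : i0 ∈ posIdx d w := Finset.max'_mem _ _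
    obtain ⟨j, hj, x, hx⟩ := hbal.1 i0 hi0
    rw [Finset.mem_inter, Aint, Bint, Finset.mem_Ioc, Finset.mem_Ioc] at hx
    obtain ⟨⟨hx1, -⟩, ⟨-, hx4⟩⟩ := hx
    have hlow : (posIdx d w).filter (fun i' => i' < i0) = (posIdx d w).erase i0 := by
      ext a
      simp only [Finset.mem_filter, Finset.mem_erase]
      constructor
      · rintro ⟨ha, hlt⟩; exact ⟨ne_of_lt hlt, ha⟩
      · rintro ⟨hne, ha⟩
        exact ⟨ha, lt_of_le_of_ne (Finset.le_max' _ _ ha) hne⟩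
    have hsub : ∑ i' ∈ (posIdx d w).filter (fun i' => i' < i0), w i' = P - w i0 := by
      rw [hlow, hP]
      have := Finset.sum_erase_add (posIdx d w) w hi0
      omega
    have hNle : ∑ j' ∈ (negIdx d w).filter (fun j' => j' ≤ j), |w j'| ≤ N := by
      apply Finset.sum_le_sum_of_subset_of_nonneg (Finset.filter_subset _ _)
      intro j' _ _; exact abs_nonneg _
    have hbi : w i0 ≤ (b : ℤ) := (le_abs_self _).trans (hb i0)
    linarith
  -- bound 2: N - P ≤ b
  have hbd2 : N - P ≤ (b : ℤ) := by
    set j0 := (negIdx d w).max' hnne with hj0def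
    have hj0 : j0 ∈ negIdx d w := Finset.max'_mem _ _
    obtain ⟨i, hi, x, hx⟩ := hbal.2 j0 hj0
    rw [Finset.mem_inter, Aint, Bint, Finset.mem_Ioc, Finset.mem_Ioc] at hx
    obtain ⟨⟨-, hx2⟩, ⟨hx3, -⟩⟩ := hx
    have hlow : (negIdx d w).filter (fun j' => j' < j0) = (negIdx d w).erase j0 := by
      ext a
      simp only [Finset.mem_filter, Finset.mem_erase]
      constructor
      · rintro ⟨ha, hlt⟩; exact ⟨ne_of_lt hlt, ha⟩
      · rintro ⟨hne, ha⟩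
        exact ⟨ha, lt_of_le_of_ne (Finset.le_max' _ _ ha) hne⟩
    have hsub : ∑ j' ∈ (negIdx d w).filter (fun j' => j' < j0), |w j'| = N - |w j0| := by
      rw [hlow, hN]
      have h2 : ∑ j' ∈ (negIdx d w).erase j0, |w j'| + |w j0| =
          ∑ j' ∈ negIdx d w, |w j'| :=
        Finset.sum_erase_add (negIdx d w) (fun j' => |w j'|) hj0
      omega
    have hPle : ∑ i' ∈ (posIdx d w).filter (fun i' => i' ≤ i), w i' ≤ P := by
      apply Finset.sum_le_sum_of_subset_of_nonneg (Finset.filter_subset _ _)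
      intro i' hi' _; exact hw_pos i' hi'
    have hbj := hb j0
    linarith
  rw [hsum]
  rw [abs_le]
  omega
end
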